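/- Under the exchangeable Gaussian model with common correlation ρ ∈ (0,1) and with ρ̂ = (1 - s_n^2)·I(s_n^2 < 1), for any sequence a_n = o(n) one has √(a_n)·(√(1-ρ) - √(1-ρ̂)) → 0 in probability as n → ∞. -/

import Mathlib

open MeasureTheory ProbabilityTheory Real Filter

/-- Unbiased sample variance of an `n`-tuple of reals. -/
noncomputable def sampleVar (n : ℕ) (x : Fin n → ℝ) : ℝ :=
  (1 / ((n : ℝ) - 1)) * ∑ i, (x i - (∑ j, x j) / n) ^ 2

/-- The exchangeable standard Gaussian model, given through its one-factor
representation: `X i = √ρ · Z 0 + √(1-ρ) · Z (i+1)` for `Z` i.i.d. `N(0,1)`,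
which yields a jointly normal vector with mean `0`, unit variances and
common pairwise correlation `ρ` (covariance `(1-ρ)·I + ρ·J`). -/
def IsEquicorrGaussian {Ω : Type*} [MeasureSpace Ω] (n : ℕ) (ρ : ℝ)
    (X : Fin n → Ω → ℝ) : Prop :=
  ∃ Z : ℕ → Ω → ℝ,
    iIndepFun Z ℙ ∧
    (∀ i, Measure.map (Z i) ℙ = gaussianReal 0 1) ∧
    (∀ i, Measurable (Z i)) ∧
    (∀ i ω, X i ω = Real.sqrt ρ * Z 0 ω + Real.sqrt (1 - ρ) * Z (i + 1) ω)

open Topology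
open scoped ENNReal NNReal

section GaussianMoments

private lemma gint (m : ℕ) : Integrable fun x : ℝ => x ^ m * Real.exp (-(1/2) * x ^ 2) := by
  have := integrable_rpow_mul_exp_neg_mul_sq (b := 1/2) (by norm_num) (s := m)
    (lt_of_lt_of_le neg_one_lt_zero (Nat.cast_nonneg m))
  simpa [Real.rpow_natCast] using this

private lemma glim (m : ℕ) :
    Tendsto (fun x : ℝ => x ^ m * Real.exp (-(1/2) * x ^ 2)) atTop (𝓝 0) := by
  have h := rpow_mul_exp_neg_mul_sq_isLittleO_exp_neg (b := 1/2) (by norm_num) (m : ℝ)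
  have h2 : Tendsto (fun x : ℝ => Real.exp (-(1/2) * x)) atTop (𝓝 (0:ℝ)) := by
    apply Real.tendsto_exp_atBot.comp
    exact (tendsto_const_mul_atBot_of_neg (by norm_num)).2 tendsto_id
  have := h.trans_tendsto h2
  refine this.congr' ?_
  filter_upwards [eventually_ge_atTop (0:ℝ)] with x hx
  rw [Real.rpow_natCast]

private lemma glim' (m : ℕ) :
    Tendsto (fun x : ℝ => x ^ m * Real.exp (-(1/2) * x ^ 2)) atBot (𝓝 0) := by
  have h := ((glim m).const_mul ((-1:ℝ)^m)).comp (tendsto_neg_atBot_atTop : Tendsto (fun x : ℝ => -x) atBot atTop)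
  simp only [mul_zero] at h
  refine h.congr fun x => ?_
  simp only [Function.comp]
  rw [neg_pow]; ring_nf
  rw [mul_comm m 2, pow_mul]; norm_num

private lemma ibp (m : ℕ) : ∫ x : ℝ, x ^ (m+2) * Real.exp (-(1/2) * x ^ 2)
    = (m+1) * ∫ x : ℝ, x ^ m * Real.exp (-(1/2) * x ^ 2) := by
  set E : ℝ → ℝ := fun x => Real.exp (-(1/2) * x ^ 2) with hE
  have hderiv : ∀ x : ℝ, HasDerivAt (fun x => -(x ^ (m+1) * E x))
      (x ^ (m+2) * E x - (m+1) * (x ^ m * E x)) x := by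
    intro x
    have h1 : HasDerivAt (fun x : ℝ => x ^ (m+1)) ((m+1) * x ^ m) x := by
      simpa using hasDerivAt_pow (m+1) x
    have h2 : HasDerivAt E (E x * (-x)) x := by
      have hg : HasDerivAt (fun x : ℝ => -(1/2) * x ^ 2) (-x) x := by
        have := (hasDerivAt_pow 2 x).const_mul (-(1/2) : ℝ)
        simpa using this.congr_deriv (by ring)
      simpa [hE, Function.comp_def] using (Real.hasDerivAt_exp _).comp x hg
    have := (h1.mul h2).neg
    refine this.congr_deriv ?_
    ring
  have hint : Integrable fun x : ℝ => x ^ (m+2) * E x - (m+1) * (x ^ m * E x) :=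
    (gint (m+2)).sub ((gint m).const_mul _)
  have h0 := integral_of_hasDerivAt_of_tendsto hderiv hint
    ((glim' (m+1)).neg) ((glim (m+1)).neg)
  simp only [neg_zero, sub_zero] at h0
  rw [integral_sub (gint (m+2)) ((gint m).const_mul _),
    MeasureTheory.integral_const_mul] at h0
  linarith [h0]

private lemma I0 : ∫ x : ℝ, Real.exp (-(1/2) * x ^ 2) = Real.sqrt (2 * π) := by
  have h := integral_gaussian (1/2)
  have h2 : Real.sqrt (π / (1/2)) = Real.sqrt (2 * π) := by
    congr 1; ring
  rw [h2] at h
  convert h using 2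

private lemma I1 : ∫ x : ℝ, x * Real.exp (-(1/2) * x ^ 2) = 0 := by
  have hderiv : ∀ x : ℝ, HasDerivAt (fun x => -Real.exp (-(1/2) * x ^ 2))
      (x * Real.exp (-(1/2) * x ^ 2)) x := by
    intro x
    have hg : HasDerivAt (fun x : ℝ => -(1/2) * x ^ 2) (-x) x := by
      have := (hasDerivAt_pow 2 x).const_mul (-(1/2) : ℝ)
      simpa using this.congr_deriv (by ring)
    have := ((Real.hasDerivAt_exp _).comp x hg).neg
    exact this.congr_deriv (by ring)
  have hint : Integrable fun x : ℝ => x * Real.exp (-(1/2) * x ^ 2) := by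
    simpa using gint 1
  have hl : Tendsto (fun x : ℝ => -Real.exp (-(1/2) * x ^ 2)) atTop (𝓝 (-0)) := by
    simpa using (glim 0).neg
  have hl' : Tendsto (fun x : ℝ => -Real.exp (-(1/2) * x ^ 2)) atBot (𝓝 (-0)) := by
    simpa using (glim' 0).neg
  have := integral_of_hasDerivAt_of_tendsto hderiv hint hl' hl
  simpa using this

private lemma I2 : ∫ x : ℝ, x ^ 2 * Real.exp (-(1/2) * x ^ 2) = Real.sqrt (2 * π) := by
  have h := ibp 0
  simp only [pow_zero, one_mul] at h
  rw [h, I0]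
  norm_num

private lemma I4 : ∫ x : ℝ, x ^ 4 * Real.exp (-(1/2) * x ^ 2) = 3 * Real.sqrt (2 * π) := by
  have h := ibp 2
  rw [I2] at h
  rw [h]
  norm_num

private lemma pdf01 (x : ℝ) :
    gaussianPDFReal 0 1 x = (Real.sqrt (2*π))⁻¹ * Real.exp (-(1/2) * x ^ 2) := by
  unfold gaussianPDFReal
  norm_num
  ring_nf
  tauto

private lemma gr01 : gaussianReal 0 1
    = volume.withDensity (fun x => ((gaussianPDFReal 0 1 x).toNNReal : ℝ≥0∞)) := by
  rw [gaussianReal_of_var_ne_zero 0 one_ne_zero]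
  rfl

private lemma gtransfer (f : ℝ → ℝ) :
    ∫ x, f x ∂(gaussianReal 0 1)
      = (Real.sqrt (2*π))⁻¹ * ∫ x, f x * Real.exp (-(1/2) * x ^ 2) := by
  rw [gr01, integral_withDensity_eq_integral_smul
    ((measurable_gaussianPDFReal 0 1).real_toNNReal) f]
  rw [← MeasureTheory.integral_const_mul]
  congr 1 with x
  rw [NNReal.smul_def, smul_eq_mul, Real.coe_toNNReal _ (gaussianPDFReal_nonneg 0 1 x), pdf01]
  ring

private lemma gintegrable (f : ℝ → ℝ)
    (hif : Integrable (fun x => f x * Real.exp (-(1/2) * x ^ 2))) :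
    Integrable f (gaussianReal 0 1) := by
  rw [gr01, integrable_withDensity_iff_integrable_smul
    ((measurable_gaussianPDFReal 0 1).real_toNNReal)]
  apply (hif.const_mul ((Real.sqrt (2*π))⁻¹)).congr
  filter_upwards with x
  rw [NNReal.smul_def, smul_eq_mul, Real.coe_toNNReal _ (gaussianPDFReal_nonneg 0 1 x), pdf01]
  ring

private lemma sqrt2pi_ne : Real.sqrt (2*π) ≠ 0 := by positivity

private lemma gm1 : ∫ x, x ∂(gaussianReal 0 1) = 0 := by
  rw [gtransfer, I1, mul_zero]

private lemma gm2 : ∫ x, x ^ 2 ∂(gaussianReal 0 1) = 1 := by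
  rw [gtransfer, I2, inv_mul_cancel₀ sqrt2pi_ne]

private lemma gm4 : ∫ x, x ^ 4 ∂(gaussianReal 0 1) = 3 := by
  rw [gtransfer, I4, mul_comm (3:ℝ), ← mul_assoc, inv_mul_cancel₀ sqrt2pi_ne, one_mul]

private lemma gmem (m : ℕ) : Integrable (fun x : ℝ => x ^ m) (gaussianReal 0 1) :=
  gintegrable _ (gint m)

private lemma gmemlp1 : MemLp (fun x : ℝ => x) 2 (gaussianReal 0 1) := by
  rw [memLp_two_iff_integrable_sq measurable_id'.aestronglyMeasurable]
  exact gmem 2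

private lemma gmemlp2 : MemLp (fun x : ℝ => x ^ 2) 2 (gaussianReal 0 1) := by
  rw [memLp_two_iff_integrable_sq (measurable_id'.pow_const 2).aestronglyMeasurable]
  have := gmem 4
  apply this.congr
  filter_upwards with x
  ring

end GaussianMoments

section RV
variable {Ω : Type*} [MeasureSpace Ω] [IsProbabilityMeasure (ℙ : Measure Ω)]
  {Z : Ω → ℝ} (hZm : Measurable Z) (hZd : Measure.map Z ℙ = gaussianReal 0 1)

include hZm hZd

private lemma rv_int (f : ℝ → ℝ) (hf : Measurable f) :
    ∫ ω, f (Z ω) ∂ℙ = ∫ x, f x ∂(gaussianReal 0 1) := by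
  rw [← hZd, integral_map hZm.aemeasurable hf.aestronglyMeasurable]

private lemma rv_mean : ∫ ω, Z ω ∂ℙ = 0 :=
  (rv_int hZm hZd (fun x => x) measurable_id').trans gm1

private lemma rv_sqmean : ∫ ω, Z ω ^ 2 ∂ℙ = 1 :=
  (rv_int hZm hZd (fun x => x ^ 2) (measurable_id'.pow_const 2)).trans gm2

private lemma rv_memlp : MemLp Z 2 ℙ := by
  have h := (memLp_map_measure_iff (μ := (ℙ : Measure Ω)) (p := 2) (g := fun x : ℝ => x)
    measurable_id'.aestronglyMeasurable hZm.aemeasurable)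
  rw [hZd] at h
  exact h.mp gmemlp1

private lemma rv_sq_memlp : MemLp (fun ω => Z ω ^ 2) 2 ℙ := by
  have h := (memLp_map_measure_iff (μ := (ℙ : Measure Ω)) (p := 2) (g := fun x : ℝ => x ^ 2)
    (measurable_id'.pow_const 2).aestronglyMeasurable hZm.aemeasurable)
  rw [hZd] at h
  exact h.mp gmemlp2

private lemma rv_var : variance Z ℙ = 1 := by
  rw [variance_eq_sub (rv_memlp hZm hZd), rv_mean hZm hZd]
  rw [show ℙ[Z ^ 2] = ∫ ω, Z ω ^ 2 ∂ℙ from rfl, rv_sqmean hZm hZd]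
  norm_num

private lemma rv_sq_var : variance (fun ω => Z ω ^ 2) ℙ = 2 := by
  rw [variance_eq_sub (rv_sq_memlp hZm hZd)]
  have h4 : ℙ[(fun ω => Z ω ^ 2) ^ 2] = 3 := by
    have h : ∫ ω, Z ω ^ 4 ∂ℙ = 3 :=
      (rv_int hZm hZd (fun x => x ^ 4) (measurable_id'.pow_const 4)).trans gm4
    rw [← h]
    congr 1 with ω
    simp [pow_mul]
    ring
  have h2 : ℙ[fun ω => Z ω ^ 2] = 1 := rv_sqmean hZm hZd
  rw [h4, h2]
  norm_num

end RV

section SampleVarLemmas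

private lemma sv_decomp (n : ℕ) (hn : 2 ≤ n) (x : Fin n → ℝ) :
    sampleVar n x = ((∑ i, x i ^ 2) - (∑ i, x i) ^ 2 / n) / ((n : ℝ) - 1) := by
  have hn0 : (0:ℝ) < n := by positivity
  have hn0' : (n:ℝ) ≠ 0 := ne_of_gt hn0
  have expand : ∀ i : Fin n, (x i - (∑ j, x j) / n) ^ 2
      = x i ^ 2 - (2 * ((∑ j, x j) / n)) * x i + ((∑ j, x j) / n) ^ 2 := by
    intro i; ring
  have hkey : ∑ i, (x i - (∑ j, x j) / n) ^ 2 = (∑ i, x i ^ 2) - (∑ i, x i) ^ 2 / n := by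
    rw [Finset.sum_congr rfl fun i _ => expand i]
    rw [Finset.sum_add_distrib, Finset.sum_sub_distrib, ← Finset.mul_sum, Finset.sum_const,
      Finset.card_univ, Fintype.card_fin, nsmul_eq_mul]
    field_simp
    ring
  unfold sampleVar
  rw [hkey]
  ring

private lemma sv_affine (n : ℕ) (hn : n ≠ 0) (cst b : ℝ) (z : Fin n → ℝ) :
    sampleVar n (fun i => cst + b * z i) = b ^ 2 * sampleVar n z := by
  have hn0 : ((n:ℝ)) ≠ 0 := Nat.cast_ne_zero.mpr hn
  unfold sampleVar
  have hsum : ∑ j : Fin n, (cst + b * z j) = n * cst + b * ∑ j, z j := by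
    rw [Finset.sum_add_distrib, Finset.sum_const, Finset.card_univ, Fintype.card_fin,
      nsmul_eq_mul, ← Finset.mul_sum]
  rw [hsum]
  have hterm : ∀ i : Fin n, (cst + b * z i - ((n:ℝ) * cst + b * ∑ j, z j) / n) ^ 2
      = b ^ 2 * (z i - (∑ j, z j) / n) ^ 2 := by
    intro i
    have : cst + b * z i - ((n:ℝ) * cst + b * ∑ j, z j) / n = b * (z i - (∑ j, z j) / n) := by
      field_simp
      ring
    rw [this]
    ring
  rw [Finset.sum_congr rfl fun i _ => hterm i, ← Finset.mul_sum]
  ring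

private lemma sv_nonneg (n : ℕ) (hn : 2 ≤ n) (z : Fin n → ℝ) : 0 ≤ sampleVar n z := by
  have h : (0:ℝ) < (n:ℝ) - 1 := by
    have : (2:ℝ) ≤ (n:ℝ) := by exact_mod_cast hn
    linarith
  have h1 : (0:ℝ) ≤ 1 / ((n:ℝ) - 1) := by positivity
  exact mul_nonneg h1 (Finset.sum_nonneg fun i _ => sq_nonneg _)

private lemma ite_min (s : ℝ) : 1 - (1 - s) * (if s < 1 then (1:ℝ) else 0) = min s 1 := by
  by_cases h : s < 1
  · simp [h, min_eq_left h.le]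
  · simp [h, min_eq_right (not_lt.mp h)]

private lemma ptwise {ρ a V ε : ℝ} (hρ0 : 0 < ρ) (hρ1 : ρ < 1) (hV : 0 ≤ V)
    (h : ε ≤ |Real.sqrt a * (Real.sqrt (1 - ρ) - Real.sqrt (min ((1 - ρ) * V) 1))|) :
    ε ≤ Real.sqrt ((1 - ρ) * a) * |V - 1| := by
  set u : ℝ := 1 - ρ with hu
  have hu0 : 0 < u := by simp only [hu]; linarith
  have hu1 : u ≤ 1 := by simp only [hu]; linarith
  set y : ℝ := min (u * V) 1 with hy
  have hy0 : 0 ≤ y := le_min (mul_nonneg hu0.le hV) one_pos.le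
  set su : ℝ := Real.sqrt u with hsu
  have hsu0 : 0 < su := Real.sqrt_pos.mpr hu0
  have husq : su ^ 2 = u := Real.sq_sqrt hu0.le
  have hprod : (Real.sqrt u - Real.sqrt y) * (Real.sqrt u + Real.sqrt y) = u - y := by
    have h1 : Real.sqrt u ^ 2 = u := Real.sq_sqrt hu0.le
    have h2 : Real.sqrt y ^ 2 = y := Real.sq_sqrt hy0
    nlinarith [h1, h2]
  have habs1 : |Real.sqrt u - Real.sqrt y| * su ≤ |u - y| := by
    calc |Real.sqrt u - Real.sqrt y| * su
        ≤ |Real.sqrt u - Real.sqrt y| * (Real.sqrt u + Real.sqrt y) := by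
          apply mul_le_mul_of_nonneg_left _ (abs_nonneg _)
          have := Real.sqrt_nonneg y
          simp only [hsu]
          linarith
      _ = |(Real.sqrt u - Real.sqrt y) * (Real.sqrt u + Real.sqrt y)| := by
          rw [abs_mul, abs_of_nonneg (by positivity : (0:ℝ) ≤ Real.sqrt u + Real.sqrt y)]
      _ = |u - y| := by rw [hprod]
  have habs2 : |u - y| ≤ u * |V - 1| := by
    rcases le_or_gt (u * V) 1 with hc | hc
    · have hyv : y = u * V := min_eq_left hc
      rw [hyv]
      have h2 : u - u * V = u * (1 - V) := by ring
      rw [h2, abs_mul, abs_of_pos hu0, abs_sub_comm]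
    · have hyy : y = 1 := min_eq_right hc.le
      have hV1 : 1 ≤ V := by
        by_contra hVlt
        push_neg at hVlt
        nlinarith
      rw [hyy, abs_of_nonpos (by linarith), abs_of_nonneg (by linarith)]
      nlinarith
  have h' : ε ≤ Real.sqrt a * |Real.sqrt u - Real.sqrt y| := by
    rw [abs_mul, abs_of_nonneg (Real.sqrt_nonneg a)] at h
    exact h
  have hstep : ε * su ≤ Real.sqrt a * (u * |V - 1|) := by
    calc ε * su ≤ (Real.sqrt a * |Real.sqrt u - Real.sqrt y|) * su := by
          apply mul_le_mul_of_nonneg_right h' hsu0.le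
      _ = Real.sqrt a * (|Real.sqrt u - Real.sqrt y| * su) := by ring
      _ ≤ Real.sqrt a * |u - y| := by
          apply mul_le_mul_of_nonneg_left habs1 (Real.sqrt_nonneg a)
      _ ≤ Real.sqrt a * (u * |V - 1|) := by
          apply mul_le_mul_of_nonneg_left habs2 (Real.sqrt_nonneg a)
  have hgoal : Real.sqrt (u * a) * |V - 1| * su = Real.sqrt a * (u * |V - 1|) := by
    rw [Real.sqrt_mul hu0.le, ← hsu]
    calc su * Real.sqrt a * |V - 1| * su = su ^ 2 * (Real.sqrt a * |V - 1|) := by ring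
      _ = Real.sqrt a * (u * |V - 1|) := by rw [husq]; ring
  rw [← mul_le_mul_iff_left₀ hsu0, hgoal]
  exact hstep

end SampleVarLemmas

section Key
variable {Ω : Type*} [MeasureSpace Ω] [IsProbabilityMeasure (ℙ : Measure Ω)]
  {n : ℕ} (hn : 2 ≤ n) {Z : ℕ → Ω → ℝ}
  (hind : iIndepFun Z ℙ)
  (hZd : ∀ i, Measure.map (Z i) ℙ = gaussianReal 0 1)
  (hZm : ∀ i, Measurable (Z i))

include hn hind hZd hZm

private lemma key (c ε : ℝ) (hc : 0 ≤ c) (hε : 0 < ε) (hsmall : c / ((n:ℝ) - 1) < ε / 3) :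
    ℙ {ω | ε ≤ c * |sampleVar n (fun i => Z (i.val + 1) ω) - 1|}
      ≤ ENNReal.ofReal (18 * n * c ^ 2 / (((n:ℝ) - 1) ^ 2 * ε ^ 2))
        + ENNReal.ofReal (3 * c / (((n:ℝ) - 1) * ε)) := by
  have hn2 : (2:ℝ) ≤ (n:ℝ) := by exact_mod_cast hn
  have hn1 : (1:ℝ) ≤ (n:ℝ) - 1 := by linarith
  have hn1' : (0:ℝ) < (n:ℝ) - 1 := by linarith
  have hn0 : (0:ℝ) < (n:ℝ) := by linarith
  rcases eq_or_lt_of_le hc with rfl | hcpos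
  · have h : {ω : Ω | ε ≤ 0 * |sampleVar n (fun i => Z (i.val + 1) ω) - 1|} = ∅ := by
      ext ω; simp only [Set.mem_setOf_eq, Set.mem_empty_iff_false, iff_false, not_le, zero_mul]
      exact hε
    rw [h]
    simp
  set M : Ω → ℝ := fun ω => ∑ i : Fin n, Z (i.val + 1) ω with hM
  set S : Ω → ℝ := fun ω => ∑ i : Fin n, Z (i.val + 1) ω ^ 2 with hS
  have hMemM : ∀ i : Fin n, MemLp (fun ω => Z (i.val + 1) ω) 2 ℙ :=
    fun i => rv_memlp (hZm _) (hZd _)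
  have hMemS : ∀ i : Fin n, MemLp (fun ω => Z (i.val + 1) ω ^ 2) 2 ℙ :=
    fun i => rv_sq_memlp (hZm _) (hZd _)
  have hMfun : M = ∑ i : Fin n, (fun ω => Z (i.val + 1) ω) := by
    ext ω; simp [hM]
  have hSfun : S = ∑ i : Fin n, (fun ω => Z (i.val + 1) ω ^ 2) := by
    ext ω; simp [hS]
  have hMemM' : MemLp M 2 ℙ := by
    rw [hMfun]; exact memLp_finsetSum' _ fun i _ => hMemM i
  have hMemS' : MemLp S 2 ℙ := by
    rw [hSfun]; exact memLp_finsetSum' _ fun i _ => hMemS i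
  have hEM : ℙ[M] = 0 := by
    show ∫ ω, M ω ∂ℙ = 0
    simp only [hM]
    rw [integral_finset_sum _ fun i _ => ((hMemM i).integrable one_le_two)]
    simp [rv_mean (hZm _) (hZd _)]
  have hES : ℙ[S] = (n:ℝ) := by
    show ∫ ω, S ω ∂ℙ = (n:ℝ)
    simp only [hS]
    rw [integral_finset_sum _ fun i _ => ((hMemS i).integrable one_le_two)]
    simp [rv_sqmean (hZm _) (hZd _)]
  have hpair : Set.Pairwise ((Finset.univ : Finset (Fin n)) : Set (Fin n))
      fun i j => IndepFun (fun ω => Z (i.val + 1) ω) (fun ω => Z (j.val + 1) ω) ℙ := by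
    intro i _ j _ hij
    exact hind.indepFun (by
      simp only [ne_eq, add_left_inj]
      exact fun h => hij (Fin.ext h))
  have hpairS : Set.Pairwise ((Finset.univ : Finset (Fin n)) : Set (Fin n))
      fun i j => IndepFun (fun ω => Z (i.val + 1) ω ^ 2) (fun ω => Z (j.val + 1) ω ^ 2) ℙ := by
    intro i hi j hj hij
    exact (hpair hi hj hij).comp (measurable_id.pow_const 2) (measurable_id.pow_const 2)
  have hVarM : variance M ℙ = n := by
    rw [hMfun, IndepFun.variance_sum (fun i _ => hMemM i) hpair]
    simp [rv_var (hZm _) (hZd _)]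
  have hVarS : variance S ℙ = 2 * n := by
    rw [hSfun, IndepFun.variance_sum (fun i _ => hMemS i) hpairS]
    simp only [rv_sq_var (hZm _) (hZd _), Finset.sum_const, Finset.card_univ, Fintype.card_fin,
      nsmul_eq_mul]
    ring
  have hincl : {ω : Ω | ε ≤ c * |sampleVar n (fun i => Z (i.val + 1) ω) - 1|}
      ⊆ {ω : Ω | ((n:ℝ) - 1) * ε / (3 * c) ≤ |S ω - ℙ[S]|}
        ∪ {ω : Ω | Real.sqrt ((n:ℝ) * ((n:ℝ) - 1) * ε / (3 * c)) ≤ |M ω - ℙ[M]|} := by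
    intro ω hω
    simp only [Set.mem_setOf_eq] at hω
    have hV : sampleVar n (fun i => Z (i.val + 1) ω) - 1
        = (S ω - n) / ((n:ℝ) - 1) + 1 / ((n:ℝ) - 1) - M ω ^ 2 / ((n:ℝ) * ((n:ℝ) - 1)) := by
      rw [sv_decomp n hn]
      simp only [hS, hM]
      field_simp
      ring
    by_contra hcon
    simp only [Set.mem_union, Set.mem_setOf_eq, not_or, not_le, hES, hEM, sub_zero] at hcon
    obtain ⟨h1, h2⟩ := hcon
    have hb1 : c * |S ω - n| / ((n:ℝ) - 1) < ε / 3 := by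
      rw [div_lt_iff₀ hn1']
      rw [lt_div_iff₀ (by positivity : (0:ℝ) < 3 * c)] at h1
      linarith
    have hb2 : c * M ω ^ 2 / ((n:ℝ) * ((n:ℝ) - 1)) < ε / 3 := by
      have hM2 : M ω ^ 2 < (n:ℝ) * ((n:ℝ) - 1) * ε / (3 * c) := by
        have hr : 0 ≤ (n:ℝ) * ((n:ℝ) - 1) * ε / (3 * c) := by positivity
        nlinarith [Real.sq_sqrt hr, Real.sqrt_nonneg ((n:ℝ) * ((n:ℝ) - 1) * ε / (3 * c)),
          abs_nonneg (M ω), sq_abs (M ω)]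
      rw [div_lt_iff₀ (by positivity)]
      rw [lt_div_iff₀ (by positivity)] at hM2
      nlinarith
    have hb3 : c * (1 / ((n:ℝ) - 1)) < ε / 3 := by
      rw [mul_one_div]; exact hsmall
    have hfin : c * |sampleVar n (fun i => Z (i.val + 1) ω) - 1| < ε := by
      rw [hV]
      calc c * |(S ω - n) / ((n:ℝ) - 1) + 1 / ((n:ℝ) - 1) - M ω ^ 2 / ((n:ℝ) * ((n:ℝ) - 1))|
          ≤ c * (|S ω - n| / ((n:ℝ) - 1) + 1 / ((n:ℝ) - 1)
              + M ω ^ 2 / ((n:ℝ) * ((n:ℝ) - 1))) := by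
            apply mul_le_mul_of_nonneg_left _ hc
            have habs : |(S ω - n) / ((n:ℝ) - 1) + 1 / ((n:ℝ) - 1)
                  - M ω ^ 2 / ((n:ℝ) * ((n:ℝ) - 1))|
                ≤ |(S ω - n) / ((n:ℝ) - 1)| + |1 / ((n:ℝ) - 1)|
                  + |M ω ^ 2 / ((n:ℝ) * ((n:ℝ) - 1))| :=
              (abs_sub _ _).trans (by gcongr; exact abs_add_le _ _)
            have e1 : |(S ω - n) / ((n:ℝ) - 1)| = |S ω - n| / ((n:ℝ) - 1) := by
              rw [abs_div, abs_of_pos hn1']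
            have e2 : |1 / ((n:ℝ) - 1)| = 1 / ((n:ℝ) - 1) := abs_of_pos (by positivity)
            have e3 : |M ω ^ 2 / ((n:ℝ) * ((n:ℝ) - 1))| = M ω ^ 2 / ((n:ℝ) * ((n:ℝ) - 1)) :=
              abs_of_nonneg (by positivity)
            rw [e1, e2, e3] at habs
            exact habs
        _ = c * |S ω - n| / ((n:ℝ) - 1) + c * (1 / ((n:ℝ) - 1))
              + c * M ω ^ 2 / ((n:ℝ) * ((n:ℝ) - 1)) := by ring
        _ < ε / 3 + ε / 3 + ε / 3 := by linarith
        _ = ε := by ring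
    exact absurd hω (not_le.mpr hfin)
  have cheb1 : ℙ {ω : Ω | ((n:ℝ) - 1) * ε / (3 * c) ≤ |S ω - ℙ[S]|}
      ≤ ENNReal.ofReal (18 * n * c ^ 2 / (((n:ℝ) - 1) ^ 2 * ε ^ 2)) := by
    have h := meas_ge_le_variance_div_sq (X := S) hMemS'
      (c := ((n:ℝ) - 1) * ε / (3 * c)) (by positivity)
    rw [hVarS] at h
    convert h using 2
    field_simp
    ring
  have cheb2 : ℙ {ω : Ω | Real.sqrt ((n:ℝ) * ((n:ℝ) - 1) * ε / (3 * c)) ≤ |M ω - ℙ[M]|}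
      ≤ ENNReal.ofReal (3 * c / (((n:ℝ) - 1) * ε)) := by
    have hrpos : (0:ℝ) < (n:ℝ) * ((n:ℝ) - 1) * ε / (3 * c) := by positivity
    have h := meas_ge_le_variance_div_sq (X := M) hMemM'
      (c := Real.sqrt ((n:ℝ) * ((n:ℝ) - 1) * ε / (3 * c))) (Real.sqrt_pos.mpr hrpos)
    rw [hVarM] at h
    convert h using 2
    rw [Real.sq_sqrt (le_of_lt hrpos)]
    field_simp
  calc ℙ {ω : Ω | ε ≤ c * |sampleVar n (fun i => Z (i.val + 1) ω) - 1|}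
      ≤ ℙ ({ω : Ω | ((n:ℝ) - 1) * ε / (3 * c) ≤ |S ω - ℙ[S]|}
        ∪ {ω : Ω | Real.sqrt ((n:ℝ) * ((n:ℝ) - 1) * ε / (3 * c)) ≤ |M ω - ℙ[M]|}) :=
        measure_mono hincl
    _ ≤ _ := (measure_union_le _ _).trans (add_le_add cheb1 cheb2)

end Key

/-- Theorem 1: with `ρ̂ = (1 - s_n²)·I(s_n² < 1)` and `a_n = o(n)`,
`√(a_n)·(√(1-ρ) - √(1-ρ̂)) → 0` in probability. -/
theorem stmt8 {Ω : Type*} [MeasureSpace Ω] [IsProbabilityMeasure (ℙ : Measure Ω)]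
    (ρ : ℝ) (hρ0 : 0 < ρ) (hρ1 : ρ < 1)
    (X : (n : ℕ) → Fin n → Ω → ℝ) (hX : ∀ n, IsEquicorrGaussian n ρ (X n))
    (a : ℕ → ℝ) (ha0 : ∀ n, 0 ≤ a n) (ha : a =o[atTop] fun n => (n : ℝ)) :
    TendstoInMeasure ℙ
      (fun n ω =>
        Real.sqrt (a n) *
          (Real.sqrt (1 - ρ) -
            Real.sqrt (1 - (1 - sampleVar n (fun i => X n i ω)) *
              (if sampleVar n (fun i => X n i ω) < 1 then (1 : ℝ) else 0))))
      atTop (fun _ => (0 : ℝ)) := by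
  simp only [IsEquicorrGaussian] at hX
  choose Z hZind hZmap hZmeas hZrep using hX
  have h1ρ : (0:ℝ) < 1 - ρ := by linarith
  set V : (n : ℕ) → Ω → ℝ := fun n ω => sampleVar n (fun i => Z n (i.val + 1) ω) with hVdef
  have hXsv : ∀ n, 2 ≤ n → ∀ ω : Ω,
      sampleVar n (fun i => X n i ω) = (1 - ρ) * V n ω := by
    intro n hn ω
    have hrepr : (fun i : Fin n => X n i ω)
        = fun i : Fin n => (Real.sqrt ρ * Z n 0 ω) + Real.sqrt (1 - ρ) * Z n (i.val + 1) ω := by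
      funext i
      exact hZrep n i ω
    rw [hrepr, sv_affine n (by omega) _ _ _, Real.sq_sqrt h1ρ.le]
  rw [tendstoInMeasure_iff_dist]
  intro ε hε
  set c : ℕ → ℝ := fun n => Real.sqrt ((1 - ρ) * a n) with hcdef
  have hcnn : ∀ n, 0 ≤ c n := fun n => Real.sqrt_nonneg _
  have hcsq : ∀ n, c n ^ 2 = (1 - ρ) * a n :=
    fun n => Real.sq_sqrt (mul_nonneg h1ρ.le (ha0 n))
  -- asymptotics
  have ht : Tendsto (fun n : ℕ => a n / (n:ℝ)) atTop (𝓝 0) := by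
    refine (Asymptotics.isLittleO_iff_tendsto' ?_).mp ha
    filter_upwards [eventually_ge_atTop 1] with n hn h
    exact absurd h (by
      have : (1:ℝ) ≤ (n:ℝ) := by exact_mod_cast hn
      linarith)
  have hd : Tendsto (fun n : ℕ => ((n:ℝ) - 1)) atTop atTop :=
    tendsto_atTop_add_const_right atTop (-1) tendsto_natCast_atTop_atTop
  have he : Tendsto (fun n : ℕ => ((n:ℝ) - 1)⁻¹) atTop (𝓝 0) := hd.inv_tendsto_atTop
  have hq : Tendsto (fun n : ℕ => (n:ℝ) / ((n:ℝ) - 1)) atTop (𝓝 1) := by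
    have h0 : Tendsto (fun n : ℕ => 1 + ((n:ℝ) - 1)⁻¹) atTop (𝓝 (1 + 0)) :=
      tendsto_const_nhds.add he
    rw [add_zero] at h0
    refine h0.congr' ?_
    filter_upwards [eventually_ge_atTop 2] with n hn
    have hne : ((n:ℝ) - 1) ≠ 0 := by
      have : (2:ℝ) ≤ (n:ℝ) := by exact_mod_cast hn
      intro h; linarith [h]
    field_simp
    ring
  have hcd : Tendsto (fun n : ℕ => c n / ((n:ℝ) - 1)) atTop (𝓝 0) := by
    have hinner : Tendsto
        (fun n : ℕ => (1 - ρ) * (a n / (n:ℝ)) * ((n:ℝ) / ((n:ℝ) - 1)) * ((n:ℝ) - 1)⁻¹)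
        atTop (𝓝 0) := by
      have h0 := ((ht.const_mul (1 - ρ)).mul hq).mul he
      simpa using h0
    have h2 := hinner.sqrt
    rw [Real.sqrt_zero] at h2
    refine h2.congr' ?_
    filter_upwards [eventually_ge_atTop 2] with n hn
    have hn2 : (2:ℝ) ≤ (n:ℝ) := by exact_mod_cast hn
    have hn1 : (0:ℝ) < (n:ℝ) - 1 := by linarith
    have hnn : ((n:ℝ)) ≠ 0 := by linarith
    have harg : (1 - ρ) * (a n / (n:ℝ)) * ((n:ℝ) / ((n:ℝ) - 1)) * ((n:ℝ) - 1)⁻¹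
        = ((1 - ρ) * a n) / ((n:ℝ) - 1) ^ 2 := by
      field_simp
    rw [harg, Real.sqrt_div (mul_nonneg h1ρ.le (ha0 n)), Real.sqrt_sq hn1.le]
  have hu1 : Tendsto (fun n : ℕ => 18 * (n:ℝ) * c n ^ 2 / (((n:ℝ) - 1) ^ 2 * ε ^ 2))
      atTop (𝓝 0) := by
    have hbase : Tendsto
        (fun n : ℕ => 18 * (1 - ρ) / ε ^ 2 * (a n / (n:ℝ)) * ((n:ℝ) / ((n:ℝ) - 1) * ((n:ℝ) / ((n:ℝ) - 1))))
        atTop (𝓝 0) := by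
      have h0 := (ht.const_mul (18 * (1 - ρ) / ε ^ 2)).mul (hq.mul hq)
      simpa using h0
    refine hbase.congr' ?_
    filter_upwards [eventually_ge_atTop 2] with n hn
    have hn2 : (2:ℝ) ≤ (n:ℝ) := by exact_mod_cast hn
    have hn1 : (0:ℝ) < (n:ℝ) - 1 := by linarith
    have hnn : ((n:ℝ)) ≠ 0 := by linarith
    rw [hcsq n]
    field_simp
  have hu2 : Tendsto (fun n : ℕ => 3 * c n / (((n:ℝ) - 1) * ε)) atTop (𝓝 0) := by
    have h0 := hcd.const_mul (3 / ε)
    rw [mul_zero] at h0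
    refine h0.congr fun n => ?_
    field_simp
  -- bound sequence
  have hB : Tendsto (fun n : ℕ =>
      ENNReal.ofReal (18 * (n:ℝ) * c n ^ 2 / (((n:ℝ) - 1) ^ 2 * ε ^ 2))
        + ENNReal.ofReal (3 * c n / (((n:ℝ) - 1) * ε))) atTop (𝓝 0) := by
    have h1 := ENNReal.tendsto_ofReal hu1
    have h2 := ENNReal.tendsto_ofReal hu2
    rw [ENNReal.ofReal_zero] at h1 h2
    simpa using h1.add h2
  have hsmall : ∀ᶠ n : ℕ in atTop, c n / ((n:ℝ) - 1) < ε / 3 :=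
    hcd.eventually_lt_const (by positivity)
  refine tendsto_of_tendsto_of_tendsto_of_le_of_le' tendsto_const_nhds hB
    (Eventually.of_forall fun n => zero_le) ?_
  filter_upwards [eventually_ge_atTop 2, hsmall] with n hn hs
  have hincl : {x : Ω | ε ≤ dist
      (Real.sqrt (a n) *
        (Real.sqrt (1 - ρ) -
          Real.sqrt (1 - (1 - sampleVar n (fun i => X n i x)) *
            (if sampleVar n (fun i => X n i x) < 1 then (1 : ℝ) else 0)))) 0}
      ⊆ {ω : Ω | ε ≤ c n * |sampleVar n (fun i => Z n (i.val + 1) ω) - 1|} := by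
    intro x hx
    simp only [Set.mem_setOf_eq, Real.dist_0_eq_abs] at hx ⊢
    rw [ite_min, hXsv n hn x] at hx
    exact ptwise hρ0 hρ1 (sv_nonneg n hn _) hx
  exact (measure_mono hincl).trans
    (key hn (hZind n) (hZmap n) (hZmeas n) (c n) ε (hcnn n) hε hs)
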